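/- The function G_t(z) = (z - √(z² - 4t))/(2t) satisfies the integrated Burgers equation G_t(z) = 1/z - ∫₀ᵗ G_s(z) ∂_z G_s(z) ds for every z in the upper half-plane and t > 0. -/

import Mathlib

open intervalIntegral

lemma aux_im (z : ℂ) (u : ℝ) : (4 * (u : ℂ) - z ^ 2).im = -(2 * z.re * z.im) := by
  simp [Complex.sub_im, Complex.mul_im, pow_two, Complex.mul_re]; try ring

lemma aux_re (z : ℂ) (u : ℝ) : (4 * (u : ℂ) - z ^ 2).re = 4 * u - (z.re ^ 2 - z.im ^ 2) := by
  simp [Complex.sub_re, Complex.mul_re, pow_two, Complex.mul_im]; try ring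

lemma aux_slit {z : ℂ} (hz : 0 < z.im) {u : ℝ} (hu : 0 ≤ u) :
    4 * (u : ℂ) - z ^ 2 ∈ Complex.slitPlane := by
  rw [Complex.mem_slitPlane_iff]
  rcases eq_or_ne z.re 0 with h | h
  · left
    rw [aux_re, h]
    nlinarith [mul_pos hz hz]
  · right
    rw [aux_im]
    intro hc
    have : z.re * z.im = 0 := by linarith
    rcases mul_eq_zero.mp this with h' | h'
    · exact h h'
    · exact absurd h' (ne_of_gt hz)

lemma aux_re_pos {w : ℂ} (hw : w ∈ Complex.slitPlane) :
    0 < (w ^ (1/2 : ℂ)).re := by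
  have hne : w ≠ 0 := Complex.slitPlane_ne_zero hw
  have h12 : (1/2 : ℂ) = ((1/2 : ℝ) : ℂ) := by norm_num
  rw [h12, Complex.cpow_ofReal_re]
  apply mul_pos
  · exact Real.rpow_pos_of_pos (norm_pos_iff.mpr hne) _
  · apply Real.cos_pos_of_mem_Ioo
    constructor
    · have := Complex.neg_pi_lt_arg w
      linarith
    · have h1 := Complex.arg_le_pi w
      have h2 := Complex.slitPlane_arg_ne_pi hw
      have : w.arg < Real.pi := lt_of_le_of_ne h1 h2
      linarith

lemma aux_sq (w : ℂ) : (w ^ (1/2 : ℂ)) ^ 2 = w := by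
  have : (1/2 : ℂ) = (((2:ℕ) : ℂ))⁻¹ := by norm_num
  rw [this, Complex.cpow_nat_inv_pow _ (by norm_num)]

lemma aux_hasDerivAt {z : ℂ} (hz : 0 < z.im) {u : ℝ} (hu : 0 ≤ u) :
    HasDerivAt (fun x : ℝ => (4 * (x:ℂ) - z ^ 2) ^ (1/2 : ℂ))
      (2 * ((4 * (u:ℂ) - z ^ 2) ^ (1/2 : ℂ))⁻¹) u := by
  have hw : HasDerivAt (fun v : ℂ => 4 * v - z ^ 2) 4 (u : ℂ) := by
    simpa using ((hasDerivAt_id ((u:ℝ) : ℂ)).const_mul (4:ℂ)).sub_const (z^2)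
  have h := HasDerivAt.comp_ofReal (HasDerivAt.cpow_const (c := (1/2 : ℂ)) hw (aux_slit hz hu))
  convert h using 1
  rw [show (1/2 - 1 : ℂ) = -(1/2) by ring, Complex.cpow_neg]
  ring

theorem burgers_integrated
    (sq : ℝ → ℂ → ℂ)
    (hsq : ∀ u : ℝ, 0 < u → ∀ w : ℂ, 0 < w.im →
      (sq u w) ^ 2 = w ^ 2 - 4 * (u : ℂ) ∧ 0 ≤ (sq u w).im)
    (G : ℝ → ℂ → ℂ)
    (hG : ∀ u : ℝ, 0 < u → ∀ w : ℂ, 0 < w.im →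
      G u w = (w - sq u w) / (2 * (u : ℂ)))
    (Gz : ℝ → ℂ → ℂ)
    (t : ℝ) (ht : 0 < t) (z : ℂ) (hz : 0 < z.im)
    (hGz : ∀ u ∈ Set.Ioc (0 : ℝ) t, HasDerivAt (G u) (Gz u z) z) :
    G t z = 1 / z - ∫ s in (0 : ℝ)..t, G s z * Gz s z := by
  have hzne : z ≠ 0 := by
    intro h; rw [h] at hz; simp at hz
  set q : ℝ → ℂ := fun u => (4 * (u:ℂ) - z ^ 2) ^ (1/2 : ℂ) with hqdef
  have hqsq : ∀ u : ℝ, (q u) ^ 2 = 4 * (u:ℂ) - z ^ 2 := fun u => aux_sq _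
  have hqre : ∀ u : ℝ, 0 ≤ u → 0 < (q u).re := fun u hu => aux_re_pos (aux_slit hz hu)
  have hqne : ∀ u : ℝ, 0 ≤ u → q u ≠ 0 := by
    intro u hu h
    have h2 := hqre u hu
    rw [h] at h2
    simp at h2
  have him : ∀ u : ℝ, 0 ≤ u → 0 < (Complex.I * q u).im := by
    intro u hu
    simpa [Complex.mul_im] using hqre u hu
  have hzq : ∀ u : ℝ, 0 ≤ u → z + Complex.I * q u ≠ 0 := by
    intro u hu h
    have h1 := him u hu
    have h2 : (z + Complex.I * q u).im = 0 := by rw [h]; simp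
    rw [Complex.add_im] at h2
    linarith
  have hIqsq : ∀ u : ℝ, (Complex.I * q u) ^ 2 = z ^ 2 - 4 * (u:ℂ) := by
    intro u
    rw [mul_pow, Complex.I_sq, hqsq]
    ring
  have hsqeq : ∀ u ∈ Set.Ioc (0:ℝ) t, sq u z = Complex.I * q u := by
    intro u hu
    obtain ⟨h1, h2⟩ := hsq u hu.1 z hz
    have hfact : (sq u z - Complex.I * q u) * (sq u z + Complex.I * q u) = 0 := by
      linear_combination h1 - hIqsq u
    rcases mul_eq_zero.mp hfact with h | h
    · exact sub_eq_zero.mp h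
    · exfalso
      have h3 := him u hu.1.le
      have h4 : sq u z = -(Complex.I * q u) := eq_neg_of_add_eq_zero_left h
      rw [h4, Complex.neg_im] at h2
      linarith
  have hGeq : ∀ u ∈ Set.Ioc (0:ℝ) t, G u z = 2 / (z + Complex.I * q u) := by
    intro u hu
    have hune : (u:ℂ) ≠ 0 := Complex.ofReal_ne_zero.mpr (ne_of_gt hu.1)
    rw [hG u hu.1 z hz, hsqeq u hu]
    rw [div_eq_div_iff (by simpa using hune) (hzq u hu.1.le)]
    linear_combination -hIqsq u
  set Φ : ℝ → ℂ := fun u => 2 / (z + Complex.I * q u) with hΦdef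
  set ψ : ℝ → ℂ := fun u => -4 * Complex.I / (q u * (z + Complex.I * q u) ^ 2) with hψdef
  have hqderiv : ∀ u : ℝ, 0 ≤ u → HasDerivAt q (2 * (q u)⁻¹) u :=
    fun u hu => aux_hasDerivAt hz hu
  have hΦderiv : ∀ u : ℝ, 0 ≤ u → HasDerivAt Φ (ψ u) u := by
    intro u hu
    have h1 : HasDerivAt (fun x : ℝ => z + Complex.I * q x) (Complex.I * (2 * (q u)⁻¹)) u :=
      ((hqderiv u hu).const_mul Complex.I).const_add z
    have h2 : HasDerivAt Φ _ u := (hasDerivAt_const u (2:ℂ)).div h1 (hzq u hu)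
    convert h2 using 1
    rw [hψdef]
    field_simp [hqne u hu]
    ring
  have hψint : IntervalIntegrable ψ MeasureTheory.volume 0 t := by
    apply ContinuousOn.intervalIntegrable
    rw [Set.uIcc_of_le ht.le]
    intro u hu
    have hc : ContinuousAt q u := (hqderiv u hu.1).continuousAt
    have hden : ContinuousAt (fun x : ℝ => q x * (z + Complex.I * q x) ^ 2) u :=
      hc.mul ((continuousAt_const.add (continuousAt_const.mul hc)).pow 2)
    have hdne : q u * (z + Complex.I * q u) ^ 2 ≠ 0 :=
      mul_ne_zero (hqne u hu.1) (pow_ne_zero 2 (hzq u hu.1))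
    exact (continuousAt_const.div hden hdne).continuousWithinAt
  have hFTC : ∫ u in (0:ℝ)..t, ψ u = Φ t - Φ 0 :=
    intervalIntegral.integral_eq_sub_of_hasDerivAt
      (fun u hu => hΦderiv u (by rw [Set.uIcc_of_le ht.le] at hu; exact hu.1)) hψint
  have hq0 : Complex.I * q 0 = z := by
    have h1 : (Complex.I * q 0) ^ 2 = z ^ 2 := by
      rw [hIqsq]; push_cast; ring
    have hfact : (Complex.I * q 0 - z) * (Complex.I * q 0 + z) = 0 := by
      linear_combination h1
    rcases mul_eq_zero.mp hfact with h | h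
    · exact sub_eq_zero.mp h
    · exfalso
      have h3 := him 0 le_rfl
      have h4 : Complex.I * q 0 = -z := eq_neg_of_add_eq_zero_left h
      rw [h4, Complex.neg_im] at h3
      linarith
  have hΦ0 : Φ 0 = 1 / z := by
    rw [hΦdef]
    simp only
    have hzz : z + z ≠ 0 := by
      rw [← two_mul]
      exact mul_ne_zero two_ne_zero hzne
    rw [hq0, div_eq_div_iff hzz hzne]
    ring
  have hprod : ∀ u ∈ Set.Ioc (0:ℝ) t, G u z * Gz u z = -ψ u := by
    intro u hu
    have hu0 : (0:ℝ) < u := hu.1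
    have hune : (u:ℂ) ≠ 0 := Complex.ofReal_ne_zero.mpr (ne_of_gt hu0)
    have hrne : Complex.I * q u ≠ 0 := mul_ne_zero Complex.I_ne_zero (hqne u hu0.le)
    have hopen : IsOpen {w : ℂ | 0 < w.im} := isOpen_lt continuous_const Complex.continuous_im
    have hev : (fun w => (w - 2 * (u:ℂ) * G u w) ^ 2) =ᶠ[nhds z]
        (fun w : ℂ => w ^ 2 - 4 * (u:ℂ)) := by
      filter_upwards [hopen.mem_nhds hz] with w hw
      have h1 := (hsq u hu0 w hw).1
      have h2 := hG u hu0 w hw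
      have h3 : w - 2 * (u:ℂ) * G u w = sq u w := by
        rw [h2]; field_simp; ring
      rw [h3, h1]
    have hS : HasDerivAt (fun w => (w - 2 * (u:ℂ) * G u w) ^ 2)
        (2 * (z - 2 * (u:ℂ) * G u z) * (1 - 2 * (u:ℂ) * Gz u z)) z := by
      have h : HasDerivAt (fun w => (w - 2 * (u:ℂ) * G u w) ^ 2) _ z := ((hasDerivAt_id z).sub ((hGz u hu).const_mul (2 * (u:ℂ)))).pow 2
      convert h using 1
      simp only [Pi.sub_apply, id_eq]
      push_cast
      ring
    have hS2 : HasDerivAt (fun w : ℂ => w ^ 2 - 4 * (u:ℂ)) (2 * z) z := by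
      simpa using (hasDerivAt_pow 2 z).sub_const (4 * (u:ℂ))
    have huniq : 2 * (z - 2 * (u:ℂ) * G u z) * (1 - 2 * (u:ℂ) * Gz u z) = 2 * z :=
      hS.unique (hS2.congr_of_eventuallyEq hev)
    have hGuz : G u z = (z - Complex.I * q u) / (2 * (u:ℂ)) := by
      rw [hG u hu0 z hz, hsqeq u hu]
    have hzr : z - 2 * (u:ℂ) * G u z = Complex.I * q u := by
      rw [hGuz]; field_simp; ring
    rw [hzr] at huniq
    have hGzval : Gz u z = (Complex.I * q u - z) / (2 * (u:ℂ) * (Complex.I * q u)) := by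
      rw [eq_div_iff (mul_ne_zero (by simpa using hune) hrne)]
      linear_combination -huniq / 2
    set r : ℂ := Complex.I * q u with hrdef
    have hr2 : r ^ 2 = z ^ 2 - 4 * (u:ℂ) := hIqsq u
    have hzrne : z + r ≠ 0 := hzq u hu0.le
    have hqu : q u = -Complex.I * r := by
      rw [hrdef]
      linear_combination (q u) * Complex.I_sq
    have hψval : ψ u = 4 / (r * (z + r) ^ 2) := by
      rw [hψdef]
      simp only [← hrdef]
      rw [hqu]
      field_simp
    rw [hGuz, hGzval, hψval]
    rw [div_mul_div_comm, ← neg_div, div_eq_div_iff (mul_ne_zero (mul_ne_zero two_ne_zero hune) (mul_ne_zero (mul_ne_zero two_ne_zero hune) hrne)) (mul_ne_zero hrne (pow_ne_zero 2 hzrne))]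
    linear_combination r * (z ^ 2 - r ^ 2 + 4 * (u:ℂ)) * hr2
  have hint_eq : (∫ s in (0:ℝ)..t, G s z * Gz s z) = ∫ s in (0:ℝ)..t, -ψ s := by
    apply intervalIntegral.integral_congr_ae
    apply MeasureTheory.ae_of_all
    intro x hx
    rw [Set.uIoc_of_le ht.le] at hx
    exact hprod x hx
  rw [hint_eq, intervalIntegral.integral_neg, hFTC, hGeq t ⟨ht, le_rfl⟩, hΦ0]
  rw [hΦdef]
  ring
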